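/- Given a Heisenberg structure on (M, α), for every smooth function H the vector field X = H·Z − Σᵢ (A_i(H)·B_i − B_i(H)·A_i) is a contact vector field with α(X) = H; i.e., it equals the contact vector field X_H with contact Hamiltonian H. -/

import Mathlib

noncomputable section

variable {E : Type*} [NormedAddCommGroup E] [NormedSpace ℝ E]

/-- The exterior derivative of a 1-form `α` on a vector space, evaluated at
`x` on the pair of vectors `(u, v)`: `dα_x(u,v)`. -/
def extD (α : E → E →L[ℝ] ℝ) (x u v : E) : ℝ :=
  fderiv ℝ α x u v - fderiv ℝ α x v u

/-- The Lie derivative of the 1-form `α` along the vector field `X`,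
evaluated at `x` on the vector `v` (algebraic definition
`(L_X α)(Y) = X(α(Y)) - α([X,Y])` applied to a constant field `Y = v`). -/
def lieD (X : E → E) (α : E → E →L[ℝ] ℝ) (x v : E) : ℝ :=
  fderiv ℝ (fun y => α y v) x (X x) + α x (fderiv ℝ X x v)

/-- The Lie bracket of vector fields on a vector space. -/
def lieB (X Y : E → E) (x : E) : E :=
  fderiv ℝ Y x (X x) - fderiv ℝ X x (Y x)

/-- A vector field is contact if `L_X α = f·α` for some function `f`. -/
def IsContactVF (α : E → E →L[ℝ] ℝ) (X : E → E) : Prop :=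
  ∃ f : E → ℝ, ∀ x v, lieD X α x v = f x * α x v

/-- A vector field is tangent to the contact distribution if `α(X) = 0`. -/
def IsTangentVF (α : E → E →L[ℝ] ℝ) (X : E → E) : Prop :=
  ∀ x, α x (X x) = 0

/-- `Z` is the Reeb field of `α`: `α(Z) = 1` and `i_Z dα = 0`. -/
def IsReeb (α : E → E →L[ℝ] ℝ) (Z : E → E) : Prop :=
  (∀ x, α x (Z x) = 1) ∧ ∀ x v, extD α x (Z x) v = 0

/-- Nondegeneracy of `dα` on the contact distribution `ξ = ker α`. -/
def NondegOnKer (α : E → E →L[ℝ] ℝ) : Prop :=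
  ∀ x v, α x v = 0 → (∀ w, α x w = 0 → extD α x v w = 0) → v = 0

/-- A Heisenberg structure on `(M, α)`: vector fields `A₁,…,Aₙ, B₁,…,Bₙ, Z`
with `Z` the Reeb field, `Aᵢ, Bⱼ` tangent to the contact distribution and
linearly independent at every point, `[Aᵢ,Bⱼ] = δᵢⱼ Z`, all other brackets
vanishing. -/
structure IsHeisenberg {E : Type*} [NormedAddCommGroup E] [NormedSpace ℝ E]
    (n : ℕ) (α : E → E →L[ℝ] ℝ) (A B : Fin n → E → E) (Z : E → E) : Prop where
  reeb : IsReeb α Z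
  tangentA : ∀ i, IsTangentVF α (A i)
  tangentB : ∀ j, IsTangentVF α (B j)
  indep : ∀ x, LinearIndependent ℝ
    (Sum.elim (fun i : Fin n => A i x) (fun j : Fin n => B j x))
  smoothA : ∀ i, ContDiff ℝ (⊤ : ℕ∞) (A i)
  smoothB : ∀ j, ContDiff ℝ (⊤ : ℕ∞) (B j)
  smoothZ : ContDiff ℝ (⊤ : ℕ∞) Z
  bracketAB : ∀ i j x, lieB (A i) (B j) x = if i = j then Z x else 0
  bracketAA : ∀ i j x, lieB (A i) (A j) x = 0
  bracketBB : ∀ i j x, lieB (B i) (B j) x = 0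
  bracketAZ : ∀ i x, lieB (A i) Z x = 0
  bracketBZ : ∀ j x, lieB (B j) Z x = 0

lemma lieB_skew (X Y : E → E) (x : E) : lieB X Y x = -(lieB Y X x) := by
  unfold lieB; abel

lemma fderiv_alpha_field {α : E → E →L[ℝ] ℝ} {W : E → E} {c : ℝ} {x : E}
    (hα : DifferentiableAt ℝ α x) (hW : DifferentiableAt ℝ W x)
    (hc : ∀ y, α y (W y) = c) (u : E) :
    fderiv ℝ α x u (W x) = - α x (fderiv ℝ W x u) := by
  have h0 : fderiv ℝ (fun y => α y (W y)) x = 0 := by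
    rw [funext hc]; exact fderiv_const_apply c
  have h1 := fderiv_clm_apply hα hW
  rw [h0] at h1
  have h2 := congrArg (fun (L : E →L[ℝ] ℝ) => L u) h1.symm
  simp only [ContinuousLinearMap.zero_apply, ContinuousLinearMap.add_apply,
    ContinuousLinearMap.comp_apply, ContinuousLinearMap.flip_apply] at h2
  linarith

lemma extD_eq_neg_alpha_lieB {α : E → E →L[ℝ] ℝ} {Y W : E → E} {c d : ℝ} {x : E}
    (hα : DifferentiableAt ℝ α x) (hY : DifferentiableAt ℝ Y x)
    (hW : DifferentiableAt ℝ W x)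
    (hcY : ∀ y, α y (Y y) = c) (hcW : ∀ y, α y (W y) = d) :
    extD α x (Y x) (W x) = - α x (lieB Y W x) := by
  unfold extD lieB
  rw [fderiv_alpha_field hα hW hcW (Y x), fderiv_alpha_field hα hY hcY (W x), map_sub]
  ring

/-- given a Heisenberg structure, for every smooth function `H`
the vector field `X = H·Z − Σᵢ (Aᵢ(H)·Bᵢ − Bᵢ(H)·Aᵢ)` is a contact vector
field with `α(X) = H`, i.e. it is the contact field with Hamiltonian `H`. -/
theorem heisenberg_contact_field_formula {n : ℕ} [FiniteDimensional ℝ E]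
    (hdim : Module.finrank ℝ E = 2 * n + 1)
    (α : E → E →L[ℝ] ℝ) (hα : ContDiff ℝ (⊤ : ℕ∞) α)
    (A B : Fin n → E → E) (Z : E → E)
    (h : IsHeisenberg n α A B Z)
    (H : E → ℝ) (hH : ContDiff ℝ (⊤ : ℕ∞) H)
    (X : E → E)
    (hX : ∀ x, X x = H x • Z x -
      ∑ i : Fin n,
        (fderiv ℝ H x (A i x) • B i x - fderiv ℝ H x (B i x) • A i x)) :
    IsContactVF α X ∧ ∀ x, α x (X x) = H x := by
  classical
  have hA0 : ∀ i (y : E), α y (A i y) = 0 := fun i => h.tangentA i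
  have hB0 : ∀ j (y : E), α y (B j y) = 0 := fun j => h.tangentB j
  have hZ1 : ∀ y : E, α y (Z y) = 1 := h.reeb.1
  have hαX : ∀ x, α x (X x) = H x := by
    intro x
    rw [hX x]
    simp [hA0, hB0, hZ1 x]
  refine ⟨⟨fun x => fderiv ℝ H x (Z x), ?_⟩, hαX⟩
  intro x v
  -- differentiability
  have hH' : ContDiff ℝ (⊤ : ℕ∞) (fderiv ℝ H) := hH.fderiv_right (mod_cast le_top)
  have hXsm : ContDiff ℝ (⊤ : ℕ∞) X := by
    rw [funext hX]
    exact (hH.smul h.smoothZ).sub (ContDiff.sum fun i _ =>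
      ((hH'.clm_apply (h.smoothA i)).smul (h.smoothB i)).sub
      ((hH'.clm_apply (h.smoothB i)).smul (h.smoothA i)))
  have hαd : DifferentiableAt ℝ α x := (hα.differentiable (by simp)) x
  have hXd : DifferentiableAt ℝ X x := (hXsm.differentiable (by simp)) x
  have hZd : DifferentiableAt ℝ Z x := (h.smoothZ.differentiable (by simp)) x
  have hAd : ∀ i, DifferentiableAt ℝ (A i) x :=
    fun i => ((h.smoothA i).differentiable (by simp)) x
  have hBd : ∀ j, DifferentiableAt ℝ (B j) x :=
    fun j => ((h.smoothB j).differentiable (by simp)) x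
  -- extD values on the frame
  have edAA : ∀ i j, extD α x (A i x) (A j x) = 0 := fun i j => by
    rw [extD_eq_neg_alpha_lieB hαd (hAd i) (hAd j) (hA0 i) (hA0 j), h.bracketAA]
    simp
  have edBB : ∀ i j, extD α x (B i x) (B j x) = 0 := fun i j => by
    rw [extD_eq_neg_alpha_lieB hαd (hBd i) (hBd j) (hB0 i) (hB0 j), h.bracketBB]
    simp
  have edAB : ∀ i j, extD α x (A i x) (B j x) = if i = j then -1 else 0 := fun i j => by
    rw [extD_eq_neg_alpha_lieB hαd (hAd i) (hBd j) (hA0 i) (hB0 j), h.bracketAB]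
    by_cases hij : i = j <;> simp [hij, hZ1 x]
  have edBA : ∀ i j, extD α x (B i x) (A j x) = if j = i then 1 else 0 := fun i j => by
    rw [extD_eq_neg_alpha_lieB hαd (hBd i) (hAd j) (hB0 i) (hA0 j),
      lieB_skew, h.bracketAB]
    by_cases hij : j = i <;> simp [hij, hZ1 x]
  have edAZ : ∀ i, extD α x (A i x) (Z x) = 0 := fun i => by
    rw [extD_eq_neg_alpha_lieB hαd (hAd i) hZd (hA0 i) hZ1, h.bracketAZ]
    simp
  have edBZ : ∀ j, extD α x (B j x) (Z x) = 0 := fun j => by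
    rw [extD_eq_neg_alpha_lieB hαd (hBd j) hZd (hB0 j) hZ1, h.bracketBZ]
    simp
  -- the basis
  set fam : Option (Fin n ⊕ Fin n) → E :=
    fun o => Option.casesOn' o (Z x)
      (Sum.elim (fun i : Fin n => A i x) (fun j : Fin n => B j x)) with hfam
  have hindep : LinearIndependent ℝ fam := by
    apply (h.indep x).option
    intro hmem
    have hle : Submodule.span ℝ (Set.range
        (Sum.elim (fun i : Fin n => A i x) (fun j : Fin n => B j x))) ≤
        LinearMap.ker (α x : E →ₗ[ℝ] ℝ) := by
      rw [Submodule.span_le]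
      rintro _ ⟨k, rfl⟩
      cases k with
      | inl i => simpa [LinearMap.mem_ker] using hA0 i x
      | inr j => simpa [LinearMap.mem_ker] using hB0 j x
    have hk := hle hmem
    simp only [LinearMap.mem_ker, ContinuousLinearMap.coe_coe] at hk
    rw [hZ1 x] at hk
    norm_num at hk
  have hcard : Fintype.card (Option (Fin n ⊕ Fin n)) = Module.finrank ℝ E := by
    simp [hdim]; omega
  set b : Module.Basis (Option (Fin n ⊕ Fin n)) ℝ E :=
    basisOfLinearIndependentOfCardEqFinrank hindep hcard with hbdef
  have hb : ⇑b = fam := coe_basisOfLinearIndependentOfCardEqFinrank _ _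
  -- the key continuous linear map
  set D : E →L[ℝ] ℝ := fderiv ℝ H x
      - ∑ i : Fin n,
        (fderiv ℝ H x (A i x) • (fderiv ℝ α x (B i x) - (fderiv ℝ α x).flip (B i x))
          - fderiv ℝ H x (B i x) • (fderiv ℝ α x (A i x) - (fderiv ℝ α x).flip (A i x)))
      - fderiv ℝ H x (Z x) • (α x) with hDdef
  have hDval : ∀ w, D w = fderiv ℝ H x w -
      (∑ i : Fin n, (fderiv ℝ H x (A i x) * extD α x (B i x) w
        - fderiv ℝ H x (B i x) * extD α x (A i x) w))
      - fderiv ℝ H x (Z x) * α x w := by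
    intro w
    simp only [hDdef, ContinuousLinearMap.sub_apply, ContinuousLinearMap.smul_apply,
      ContinuousLinearMap.sum_apply, ContinuousLinearMap.flip_apply, smul_eq_mul, extD]
  have hD0 : ∀ w, D w = 0 := by
    have hext : (D : E →ₗ[ℝ] ℝ) = (0 : E →ₗ[ℝ] ℝ) := by
      apply b.ext
      intro k
      have hbk : b k = fam k := by rw [hb]
      rw [ContinuousLinearMap.coe_coe, LinearMap.zero_apply, hbk]
      cases k with
      | none =>
        simp only [hfam, Option.casesOn']
        rw [hDval]
        simp [edAZ, edBZ, hZ1 x]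
      | some k =>
        cases k with
        | inl j =>
          simp only [hfam, Option.casesOn', Sum.elim_inl]
          rw [hDval]
          simp [edBA, edAA, hA0 j x, mul_ite, Finset.sum_ite_eq]
        | inr j =>
          simp only [hfam, Option.casesOn', Sum.elim_inr]
          rw [hDval]
          simp [edAB, edBB, hB0 j x, mul_ite, Finset.sum_ite_eq']
    intro w
    have := LinearMap.congr_fun hext w
    simpa using this
  -- Cartan computation
  have step1 : fderiv ℝ (fun y => α y v) x (X x) = fderiv ℝ α x (X x) v := by
    have e1 : fderiv ℝ (fun y => α y v) x = (fderiv ℝ α x).flip v := by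
      have := fderiv_clm_apply (c := α) (u := fun _ => v) hαd (differentiableAt_const v)
      simpa using this
    rw [e1, ContinuousLinearMap.flip_apply]
  have step3 : fderiv ℝ H x v = α x (fderiv ℝ X x v) + fderiv ℝ α x v (X x) := by
    have h1 := fderiv_clm_apply hαd hXd
    have h2 : (fun y => α y (X y)) = H := funext hαX
    rw [h2] at h1
    have h3 := congrArg (fun (L : E →L[ℝ] ℝ) => L v) h1
    simpa [ContinuousLinearMap.add_apply, ContinuousLinearMap.comp_apply,
      ContinuousLinearMap.flip_apply] using h3
  have expand : extD α x (X x) v =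
      H x * extD α x (Z x) v -
      ∑ i : Fin n, (fderiv ℝ H x (A i x) * extD α x (B i x) v
        - fderiv ℝ H x (B i x) * extD α x (A i x) v) := by
    have hTe : ∀ u, extD α x u v =
        ((fderiv ℝ α x).flip v - fderiv ℝ α x v) u := fun u => by
      simp [extD, ContinuousLinearMap.sub_apply, ContinuousLinearMap.flip_apply]
    rw [hTe, hX x]
    simp only [map_sub, map_smul, map_sum, smul_eq_mul]
    simp only [← hTe]
  have hreeb : extD α x (Z x) v = 0 := h.reeb.2 x v
  have hDv := hD0 v
  rw [hDval v] at hDv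
  unfold lieD
  rw [step1]
  have : fderiv ℝ α x (X x) v + α x (fderiv ℝ X x v)
      = extD α x (X x) v + fderiv ℝ H x v := by
    unfold extD; linarith [step3]
  rw [this, expand, hreeb]
  linarith [hDv]
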